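/- Let K_H and K_V be two continua (nonempty compact connected subsets) in the plane ℝ², such that K_H contains the points (0,0) and (1,0), and K_V contains the points (0,0) and (0,1). Then for every nonzero vector w ∈ ℝ² there exists a closed connected set M_w ⊆ ℝ² which is a union of integer translates of K_H and K_V (that is, M_w = (⋃_{u∈A} (K_H + u)) ∪ (⋃_{u∈B} (K_V + u)) for some subsets A, B ⊆ ℤ²) such that: (1) M_w intersects every straight line orthogonal to w; and (2) M_w is contained between two straight lines r and s, both parallel to w, whose distance from each other is less than 3 + 2·max{diam(K_H), diam(K_V)}. -/

import Mathlib

open Set Metric Bornology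
open scoped RealInnerProductSpace

noncomputable section

/-- The Euclidean plane. -/
abbrev E2 : Type := EuclideanSpace ℝ (Fin 2)

/-- The first standard basis vector `(1,0)`. -/
def e₁ : E2 := EuclideanSpace.single 0 1

/-- The second standard basis vector `(0,1)`. -/
def e₂ : E2 := EuclideanSpace.single 1 1

/-- The point of the plane corresponding to an integer vector. -/
def zvec (m : ℤ × ℤ) : E2 := (m.1 : ℝ) • e₁ + (m.2 : ℝ) • e₂

/-- The translate of a set by a vector. -/
def etrans (S : Set E2) (v : E2) : Set E2 := (fun z => z + v) '' S

/-- The vector `w` rotated by 90 degrees. -/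
def perp (w : E2) : E2 :=
  EuclideanSpace.single 0 (-(w 1)) + EuclideanSpace.single 1 (w 0)

lemma e2_ext {x y : E2} (h0 : x 0 = y 0) (h1 : x 1 = y 1) : x = y := by
  ext i; fin_cases i <;> assumption

lemma inner_E2 (x y : E2) : ⟪x, y⟫ = x 0 * y 0 + x 1 * y 1 := by
  simp [PiLp.inner_apply, RCLike.inner_apply, Fin.sum_univ_two]; ring

lemma e₁_0 : e₁ 0 = 1 := by simp [e₁]
lemma e₁_1 : e₁ 1 = 0 := by simp [e₁, EuclideanSpace.single_apply]
lemma e₂_0 : e₂ 0 = 0 := by simp [e₂, EuclideanSpace.single_apply]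
lemma e₂_1 : e₂ 1 = 1 := by simp [e₂]
lemma perp_0 (w : E2) : perp w 0 = -(w 1) := by
  simp [perp, EuclideanSpace.single_apply]
lemma perp_1 (w : E2) : perp w 1 = w 0 := by
  simp [perp, EuclideanSpace.single_apply]
lemma zvec_0 (m : ℤ × ℤ) : zvec m 0 = m.1 := by
  simp [zvec, e₁_0, e₂_0, PiLp.add_apply, PiLp.smul_apply]
lemma zvec_1 (m : ℤ × ℤ) : zvec m 1 = m.2 := by
  simp [zvec, e₁_1, e₂_1, PiLp.add_apply, PiLp.smul_apply]

lemma norm_perp (w : E2) : ‖perp w‖ = ‖w‖ := by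
  rw [EuclideanSpace.norm_eq, EuclideanSpace.norm_eq]
  congr 1
  simp [Fin.sum_univ_two, perp_0, perp_1]
  ring

lemma abs_coord_le (x : E2) (i : Fin 2) : |x i| ≤ ‖x‖ := by
  rw [EuclideanSpace.norm_eq, ← Real.sqrt_sq_eq_abs]
  apply Real.sqrt_le_sqrt
  fin_cases i <;> simp [Fin.sum_univ_two] <;> positivity

lemma inner_w_perp (w : E2) : ⟪w, perp w⟫ = 0 := by
  rw [inner_E2, perp_0, perp_1]; ring

lemma norm_le_one_of_half (x : E2) (h0 : |x 0| ≤ 1/2) (h1 : |x 1| ≤ 1/2) : ‖x‖ ≤ 1 := by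
  rw [EuclideanSpace.norm_eq]
  have key : ∑ i, ‖x i‖^2 ≤ 1 := by
    rw [Fin.sum_univ_two]
    have a0 := abs_le.mp h0
    have a1 := abs_le.mp h1
    simp only [Real.norm_eq_abs, sq_abs]
    nlinarith [a0.1, a0.2, a1.1, a1.2]
  calc Real.sqrt (∑ i, ‖x i‖^2) ≤ Real.sqrt 1 := Real.sqrt_le_sqrt key
  _ = 1 := Real.sqrt_one

lemma eq_smul_perp_of_inner_eq_zero (w : E2) (hw : w ≠ 0) (d : E2) (hd : ⟪d, w⟫ = 0) :
    ∃ t : ℝ, d = t • perp w := by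
  have h2 : w 0 ^ 2 + w 1 ^ 2 ≠ 0 := by
    intro h
    apply hw
    have ha : w 0 = 0 := by nlinarith [sq_nonneg (w 0), sq_nonneg (w 1)]
    have hb : w 1 = 0 := by nlinarith [sq_nonneg (w 0), sq_nonneg (w 1)]
    apply e2_ext <;> simp [ha, hb]
  rw [inner_E2] at hd
  refine ⟨(d 1 * w 0 - d 0 * w 1) / (w 0 ^ 2 + w 1 ^ 2), e2_ext ?_ ?_⟩
  · rw [PiLp.smul_apply, perp_0, smul_eq_mul]
    field_simp
    linear_combination (w 0) * hd
  · rw [PiLp.smul_apply, perp_1, smul_eq_mul]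
    field_simp
    linear_combination (w 1) * hd

/- lattice machinery -/
lemma step_choice (B x α β m k : ℝ) (hm : 1 ≤ m) (hk : 1 ≤ k)
    (hx : |x| ≤ B) (hα : |α| ≤ B) (hβ : |β| ≤ B)
    (hv : |x + m * α + k * β| ≤ B) :
    |x + α| ≤ B ∨ |x + β| ≤ B := by
  by_contra h
  push_neg at h
  obtain ⟨h1, h2⟩ := h
  rw [abs_le] at hx hα hβ hv
  rcases lt_abs.mp h1 with ha | ha <;> rcases lt_abs.mp h2 with hb | hb
  · have hα0 : 0 < α := by linarith [hx.2]
    have hβ0 : 0 < β := by linarith [hx.2]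
    have h3 : α ≤ m * α := le_mul_of_one_le_left hα0.le hm
    have h4 : β ≤ k * β := le_mul_of_one_le_left hβ0.le hk
    linarith [hv.2]
  · linarith
  · linarith
  · have hα0 : α < 0 := by linarith [hx.1]
    have hβ0 : β < 0 := by linarith [hx.1]
    have h3 : m * α ≤ α := by nlinarith
    have h4 : k * β ≤ β := by nlinarith
    linarith [hv.1]

lemma step_single (B x β k : ℝ) (hk : 1 ≤ k) (hx : |x| ≤ B) (hβ : |β| ≤ B)
    (hv : |x + k * β| ≤ B) : |x + β| ≤ B := by
  by_contra h
  rw [abs_le] at hx hv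
  rcases lt_abs.mp (not_le.mp h) with ha | ha
  · have hβ0 : 0 < β := by linarith [hx.2]
    have h4 : β ≤ k * β := le_mul_of_one_le_left hβ0.le hk
    linarith [hv.2]
  · have hβ0 : β < 0 := by linarith [hx.1]
    have h4 : k * β ≤ β := by nlinarith
    linarith [hv.1]

lemma sign_cast_mul (q : ℤ) : (q : ℝ) = (q.natAbs : ℝ) * (q.sign : ℝ) := by
  rcases lt_trichotomy q 0 with h | h | h
  · rw [Int.sign_eq_neg_one_of_neg h]
    have hq' : (q.natAbs : ℝ) = -(q : ℝ) := by
      rw [Nat.cast_natAbs]; exact_mod_cast abs_of_neg h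
    rw [hq']; push_cast; ring
  · simp [h]
  · rw [Int.sign_eq_one_of_pos h]
    have hq' : (q.natAbs : ℝ) = (q : ℝ) := by
      rw [Nat.cast_natAbs]; exact_mod_cast abs_of_pos h
    rw [hq']; push_cast; ring

lemma abs_sign_mul (q : ℤ) (hq : q ≠ 0) (δ B : ℝ) (h : |δ| ≤ B) :
    |(q.sign : ℝ) * δ| ≤ B := by
  rcases lt_or_gt_of_ne hq with h' | h'
  · rw [Int.sign_eq_neg_one_of_neg h']; simpa [abs_neg] using h
  · rw [Int.sign_eq_one_of_pos h']; simpa using h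

lemma exists_step (δ₁ δ₂ B : ℝ) (h1 : |δ₁| ≤ B) (h2 : |δ₂| ≤ B) (u v : ℤ × ℤ)
    (hne : u ≠ v)
    (hu : |(u.1 : ℝ) * δ₁ + (u.2 : ℝ) * δ₂| ≤ B)
    (hv : |(v.1 : ℝ) * δ₁ + (v.2 : ℝ) * δ₂| ≤ B) :
    ∃ u' : ℤ × ℤ, |(u'.1 : ℝ) * δ₁ + (u'.2 : ℝ) * δ₂| ≤ B ∧
      (u'.1 - u.1).natAbs + (u'.2 - u.2).natAbs = 1 ∧
      (v.1 - u'.1).natAbs + (v.2 - u'.2).natAbs + 1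
        = (v.1 - u.1).natAbs + (v.2 - u.2).natAbs := by
  set p := v.1 - u.1 with hp
  set q := v.2 - u.2 with hq
  have hsign : ∀ r : ℤ, r ≠ 0 → (r.sign = 1 ∧ 0 < r) ∨ (r.sign = -1 ∧ r < 0) := by
    intro r hr
    rcases lt_or_gt_of_ne hr with h' | h'
    · exact Or.inr ⟨Int.sign_eq_neg_one_of_neg h', h'⟩
    · exact Or.inl ⟨Int.sign_eq_one_of_pos h', h'⟩
  by_cases hp0 : p = 0
  · have hq0 : q ≠ 0 := by
      intro h; apply hne; apply Prod.ext <;> omega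
    refine ⟨(u.1, u.2 + q.sign), ?_, ?_, ?_⟩
    · have key : ((v.1 : ℝ) * δ₁ + (v.2 : ℝ) * δ₂)
          = ((u.1 : ℝ) * δ₁ + (u.2 : ℝ) * δ₂) + (q.natAbs : ℝ) * ((q.sign : ℝ) * δ₂) := by
        have e2 : (q : ℝ) = (q.natAbs : ℝ) * (q.sign : ℝ) := sign_cast_mul q
        have hv1 : (v.1 : ℝ) = (u.1 : ℝ) := by
          rw [hp] at hp0; push_cast [show v.1 = u.1 by omega]; ring
        have hv2 : (v.2 : ℝ) = (u.2 : ℝ) + (q : ℝ) := by push_cast [hq]; ring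
        rw [hv1, hv2, e2]; ring
      have hk : (1 : ℝ) ≤ (q.natAbs : ℝ) := by
        have : 1 ≤ q.natAbs := by omega
        exact_mod_cast this
      have := step_single B ((u.1 : ℝ) * δ₁ + (u.2 : ℝ) * δ₂) ((q.sign : ℝ) * δ₂)
        (q.natAbs : ℝ) hk hu (abs_sign_mul q hq0 δ₂ B h2) (by rw [← key]; exact hv)
      push_cast
      convert this using 2
      ring
    · rcases hsign q hq0 with ⟨hs, hpos⟩ | ⟨hs, hneg⟩ <;> simp [hs]
    · rcases hsign q hq0 with ⟨hs, hpos⟩ | ⟨hs, hneg⟩ <;> simp [hs] <;> omega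
  · by_cases hq0 : q = 0
    · refine ⟨(u.1 + p.sign, u.2), ?_, ?_, ?_⟩
      · have key : ((v.1 : ℝ) * δ₁ + (v.2 : ℝ) * δ₂)
            = ((u.1 : ℝ) * δ₁ + (u.2 : ℝ) * δ₂) + (p.natAbs : ℝ) * ((p.sign : ℝ) * δ₁) := by
          have e1 : (p : ℝ) = (p.natAbs : ℝ) * (p.sign : ℝ) := sign_cast_mul p
          have hv2 : (v.2 : ℝ) = (u.2 : ℝ) := by
            rw [hq] at hq0; push_cast [show v.2 = u.2 by omega]; ring
          have hv1 : (v.1 : ℝ) = (u.1 : ℝ) + (p : ℝ) := by push_cast [hp]; ring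
          rw [hv1, hv2, e1]; ring
        have hk : (1 : ℝ) ≤ (p.natAbs : ℝ) := by
          have : 1 ≤ p.natAbs := by omega
          exact_mod_cast this
        have := step_single B ((u.1 : ℝ) * δ₁ + (u.2 : ℝ) * δ₂) ((p.sign : ℝ) * δ₁)
          (p.natAbs : ℝ) hk hu (abs_sign_mul p hp0 δ₁ B h1) (by rw [← key]; exact hv)
        push_cast
        convert this using 2
        ring
      · rcases hsign p hp0 with ⟨hs, hpos⟩ | ⟨hs, hneg⟩ <;> simp [hs]
      · rcases hsign p hp0 with ⟨hs, hpos⟩ | ⟨hs, hneg⟩ <;> simp [hs] <;> omega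
    · have key : ((v.1 : ℝ) * δ₁ + (v.2 : ℝ) * δ₂)
          = ((u.1 : ℝ) * δ₁ + (u.2 : ℝ) * δ₂)
            + (p.natAbs : ℝ) * ((p.sign : ℝ) * δ₁) + (q.natAbs : ℝ) * ((q.sign : ℝ) * δ₂) := by
        have e1 : (p : ℝ) = (p.natAbs : ℝ) * (p.sign : ℝ) := sign_cast_mul p
        have e2 : (q : ℝ) = (q.natAbs : ℝ) * (q.sign : ℝ) := sign_cast_mul q
        have hv1 : (v.1 : ℝ) = (u.1 : ℝ) + (p : ℝ) := by push_cast [hp]; ring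
        have hv2 : (v.2 : ℝ) = (u.2 : ℝ) + (q : ℝ) := by push_cast [hq]; ring
        rw [hv1, hv2, e1, e2]; ring
      have hm : (1 : ℝ) ≤ (p.natAbs : ℝ) := by
        have : 1 ≤ p.natAbs := by omega
        exact_mod_cast this
      have hk : (1 : ℝ) ≤ (q.natAbs : ℝ) := by
        have : 1 ≤ q.natAbs := by omega
        exact_mod_cast this
      rcases step_choice B ((u.1 : ℝ) * δ₁ + (u.2 : ℝ) * δ₂) ((p.sign : ℝ) * δ₁)
          ((q.sign : ℝ) * δ₂) (p.natAbs : ℝ) (q.natAbs : ℝ) hm hk hu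
          (abs_sign_mul p hp0 δ₁ B h1) (abs_sign_mul q hq0 δ₂ B h2)
          (by rw [← key]; exact hv) with hgood | hgood
      · refine ⟨(u.1 + p.sign, u.2), ?_, ?_, ?_⟩
        · push_cast; convert hgood using 2; ring
        · rcases hsign p hp0 with ⟨hs, hpos⟩ | ⟨hs, hneg⟩ <;> simp [hs]
        · rcases hsign p hp0 with ⟨hs, hpos⟩ | ⟨hs, hneg⟩ <;> simp [hs] <;> omega
      · refine ⟨(u.1, u.2 + q.sign), ?_, ?_, ?_⟩
        · push_cast; convert hgood using 2; ring
        · rcases hsign q hq0 with ⟨hs, hpos⟩ | ⟨hs, hneg⟩ <;> simp [hs]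
        · rcases hsign q hq0 with ⟨hs, hpos⟩ | ⟨hs, hneg⟩ <;> simp [hs] <;> omega

lemma lattice_chain (δ₁ δ₂ B : ℝ) (h1 : |δ₁| ≤ B) (h2 : |δ₂| ≤ B)
    {Adj : ℤ × ℤ → ℤ × ℤ → Prop}
    (hAdj : ∀ a b : ℤ × ℤ, |(a.1 : ℝ) * δ₁ + (a.2 : ℝ) * δ₂| ≤ B →
      |(b.1 : ℝ) * δ₁ + (b.2 : ℝ) * δ₂| ≤ B →
      (b.1 - a.1).natAbs + (b.2 - a.2).natAbs = 1 → Adj a b)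
    (u v : ℤ × ℤ)
    (hu : |(u.1 : ℝ) * δ₁ + (u.2 : ℝ) * δ₂| ≤ B)
    (hv : |(v.1 : ℝ) * δ₁ + (v.2 : ℝ) * δ₂| ≤ B) :
    Relation.ReflTransGen Adj u v := by
  generalize hn : (v.1 - u.1).natAbs + (v.2 - u.2).natAbs = n
  induction n generalizing u with
  | zero =>
    have : u = v := by apply Prod.ext <;> omega
    rw [this]
  | succ n ih =>
    have hne : u ≠ v := by
      intro h; rw [h] at hn; omega
    obtain ⟨u', hu', hadj, hdec⟩ := exists_step δ₁ δ₂ B h1 h2 u v hne hu hv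
    exact Relation.ReflTransGen.head (hAdj u u' hu hu' hadj) (ih u' hu' (by omega))

/-- Lemma 6 of [2]: given continua `K_H ∋ (0,0), (1,0)` and `K_V ∋ (0,0), (0,1)`
in the plane, for every nonzero vector `w` there is a closed connected set `M`, a union of
integer translates of `K_H` and `K_V`, which meets every straight line orthogonal to `w` and
lies between two straight lines parallel to `w` at distance less than
`3 + 2·max{diam K_H, diam K_V}` from each other. -/
theorem exists_connected_union_of_translates_between_lines
    (KH KV : Set E2)
    (hKHc : IsCompact KH) (hKHconn : IsConnected KH)
    (hKVc : IsCompact KV) (hKVconn : IsConnected KV)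
    (h0H : (0 : E2) ∈ KH) (h1H : e₁ ∈ KH)
    (h0V : (0 : E2) ∈ KV) (h1V : e₂ ∈ KV)
    (w : E2) (hw : w ≠ 0) :
    ∃ M : Set E2, IsClosed M ∧ IsConnected M ∧
      (∃ A B : Set (ℤ × ℤ),
        M = (⋃ u ∈ A, etrans KH (zvec u)) ∪ (⋃ u ∈ B, etrans KV (zvec u))) ∧
      (∀ z₀ : E2, (M ∩ {z : E2 | ∃ t : ℝ, z = z₀ + t • perp w}).Nonempty) ∧
      (∃ c₁ c₂ : ℝ, c₂ - c₁ < 3 + 2 * max (diam KH) (diam KV) ∧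
        ∀ z ∈ M, c₁ ≤ ⟪z, ‖w‖⁻¹ • perp w⟫ ∧ ⟪z, ‖w‖⁻¹ • perp w⟫ ≤ c₂) := by
  classical
  have hnw : (0 : ℝ) < ‖w‖ := norm_pos_iff.mpr hw
  set D : ℝ := max (diam KH) (diam KV) with hD
  have hK_norm : ∀ k ∈ KH ∪ KV, ‖k‖ ≤ D := by
    rintro k (hk | hk)
    · have h := dist_le_diam_of_mem hKHc.isBounded hk h0H
      rw [dist_zero_right] at h
      exact h.trans (le_max_left _ _)
    · have h := dist_le_diam_of_mem hKVc.isBounded hk h0V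
      rw [dist_zero_right] at h
      exact h.trans (le_max_right _ _)
  have hφ_zvec : ∀ m : ℤ × ℤ, ⟪zvec m, perp w⟫ = (m.1 : ℝ) * (-(w 1)) + (m.2 : ℝ) * (w 0) := by
    intro m
    rw [inner_E2, zvec_0, zvec_1, perp_0, perp_1]
  set S : Set (ℤ × ℤ) := {u : ℤ × ℤ | |⟪zvec u, perp w⟫| ≤ ‖w‖} with hS
  set C : ℤ × ℤ → Set E2 := fun u => etrans KH (zvec u) ∪ etrans KV (zvec u) with hC
  have hmemH : ∀ u : ℤ × ℤ, ∀ k ∈ KH, k + zvec u ∈ C u := fun u k hk => Or.inl ⟨k, hk, rfl⟩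
  have hmemV : ∀ u : ℤ × ℤ, ∀ k ∈ KV, k + zvec u ∈ C u := fun u k hk => Or.inr ⟨k, hk, rfl⟩
  have hzvec_mem : ∀ u : ℤ × ℤ, zvec u ∈ C u := fun u => by
    have := hmemH u 0 h0H; rwa [zero_add] at this
  have hCdecomp : ∀ u : ℤ × ℤ, ∀ z ∈ C u, ∃ k ∈ KH ∪ KV, z = k + zvec u := by
    rintro u z (⟨k, hk, rfl⟩ | ⟨k, hk, rfl⟩)
    · exact ⟨k, Or.inl hk, rfl⟩
    · exact ⟨k, Or.inr hk, rfl⟩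
  have hCconn : ∀ u : ℤ × ℤ, IsConnected (C u) := by
    intro u
    refine IsConnected.union ⟨zvec u, ⟨0, h0H, zero_add _⟩, ⟨0, h0V, zero_add _⟩⟩
      (hKHconn.image _ (continuous_add_right (zvec u)).continuousOn)
      (hKVconn.image _ (continuous_add_right (zvec u)).continuousOn)
  have hCcpt : ∀ u : ℤ × ℤ, IsCompact (C u) := fun u =>
    (hKHc.image (continuous_add_right (zvec u))).union
      (hKVc.image (continuous_add_right (zvec u)))
  have hCsub : ∀ u : ℤ × ℤ, C u ⊆ closedBall (zvec u) D := by
    intro u z hz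
    obtain ⟨k, hk, rfl⟩ := hCdecomp u z hz
    rw [mem_closedBall, dist_eq_norm, add_sub_cancel_right]
    exact hK_norm k hk
  have h0S : ((0, 0) : ℤ × ℤ) ∈ S := by
    simp only [hS, mem_setOf_eq, hφ_zvec]
    push_cast
    simp
  have hadj : ∀ a b : ℤ × ℤ, (b.1 - a.1).natAbs + (b.2 - a.2).natAbs = 1 →
      (C a ∩ C b).Nonempty := by
    intro a b hab
    have hz1 : ∀ m : ℤ × ℤ, zvec (m.1 + 1, m.2) = e₁ + zvec m := by
      intro m
      apply e2_ext <;>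
        simp only [zvec_0, zvec_1, PiLp.add_apply, e₁_0, e₁_1] <;> push_cast <;> ring
    have hz2 : ∀ m : ℤ × ℤ, zvec (m.1, m.2 + 1) = e₂ + zvec m := by
      intro m
      apply e2_ext <;>
        simp only [zvec_0, zvec_1, PiLp.add_apply, e₂_0, e₂_1] <;> push_cast <;> ring
    rcases (by omega : (b.1 = a.1 + 1 ∧ b.2 = a.2) ∨ (a.1 = b.1 + 1 ∧ a.2 = b.2) ∨
        (b.2 = a.2 + 1 ∧ b.1 = a.1) ∨ (a.2 = b.2 + 1 ∧ a.1 = b.1)) with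
      ⟨h1, h2⟩ | ⟨h1, h2⟩ | ⟨h1, h2⟩ | ⟨h1, h2⟩
    · refine ⟨zvec b, ?_, hzvec_mem b⟩
      have hb : zvec b = e₁ + zvec a := by
        rw [show b = (a.1 + 1, a.2) from Prod.ext h1 h2]
        exact hz1 a
      rw [hb]
      exact hmemH a e₁ h1H
    · refine ⟨zvec a, hzvec_mem a, ?_⟩
      have ha : zvec a = e₁ + zvec b := by
        rw [show a = (b.1 + 1, b.2) from Prod.ext h1 h2]
        exact hz1 b
      rw [ha]
      exact hmemH b e₁ h1H
    · refine ⟨zvec b, ?_, hzvec_mem b⟩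
      have hb : zvec b = e₂ + zvec a := by
        rw [show b = (a.1, a.2 + 1) from Prod.ext h2 h1]
        exact hz2 a
      rw [hb]
      exact hmemV a e₂ h1V
    · refine ⟨zvec a, hzvec_mem a, ?_⟩
      have ha : zvec a = e₂ + zvec b := by
        rw [show a = (b.1, b.2 + 1) from Prod.ext h2 h1]
        exact hz2 b
      rw [ha]
      exact hmemV b e₂ h1V
  have hchain : ∀ i ∈ S, ∀ j ∈ S, Relation.ReflTransGen
      (fun i j : ℤ × ℤ => (C i ∩ C j).Nonempty ∧ i ∈ S) i j := by
    intro i hi j hj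
    apply lattice_chain (-(w 1)) (w 0) ‖w‖
    · rw [abs_neg]; exact abs_coord_le w 1
    · exact abs_coord_le w 0
    · intro a b ha hb hab
      refine ⟨hadj a b hab, ?_⟩
      rw [hS, mem_setOf_eq, hφ_zvec]
      exact ha
    · rw [hS, mem_setOf_eq, hφ_zvec] at hi; exact hi
    · rw [hS, mem_setOf_eq, hφ_zvec] at hj; exact hj
  set M : Set E2 := ⋃ u ∈ S, C u with hM
  have hMconn : IsConnected M := IsConnected.biUnion_of_reflTransGen ⟨(0, 0), h0S⟩
    (fun u _ => hCconn u) hchain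
  have hMclosed : IsClosed M := by
    refine isClosed_of_closure_subset ?_
    intro x hx
    set F : Set (ℤ × ℤ) := {u ∈ S | (C u ∩ closedBall x 1).Nonempty} with hF
    have hcoord : ∀ u ∈ F, |(u.1 : ℝ) - x 0| ≤ D + 1 ∧ |(u.2 : ℝ) - x 1| ≤ D + 1 := by
      rintro u ⟨huS, y, hyC, hyB⟩
      have h1 : dist y (zvec u) ≤ D := hCsub u hyC
      have h2 : dist y x ≤ 1 := hyB
      have h4 : ‖zvec u - x‖ ≤ D + 1 := by
        rw [← dist_eq_norm]
        calc dist (zvec u) x ≤ dist (zvec u) y + dist y x := dist_triangle _ _ _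
        _ ≤ D + 1 := by rw [dist_comm (zvec u) y]; linarith
      constructor
      · have h5 := (abs_coord_le (zvec u - x) 0).trans h4
        rwa [PiLp.sub_apply, zvec_0] at h5
      · have h5 := (abs_coord_le (zvec u - x) 1).trans h4
        rwa [PiLp.sub_apply, zvec_1] at h5
    have hFfin : F.Finite := by
      apply Set.Finite.subset ((Set.finite_Icc (⌈x 0 - (D + 1)⌉) (⌊x 0 + (D + 1)⌋)).prod
        (Set.finite_Icc (⌈x 1 - (D + 1)⌉) (⌊x 1 + (D + 1)⌋)))
      intro u hu
      obtain ⟨ha, hb⟩ := hcoord u hu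
      rw [abs_le] at ha hb
      refine ⟨Set.mem_Icc.mpr ⟨Int.ceil_le.mpr (by linarith [ha.1]),
        Int.le_floor.mpr (by linarith [ha.2])⟩,
        Set.mem_Icc.mpr ⟨Int.ceil_le.mpr (by linarith [hb.1]),
        Int.le_floor.mpr (by linarith [hb.2])⟩⟩
    have hclosedF : IsClosed (⋃ u ∈ F, C u) :=
      hFfin.isClosed_biUnion (fun u _ => (hCcpt u).isClosed)
    have hsub : M ∩ closedBall x 1 ⊆ ⋃ u ∈ F, C u := by
      rintro y ⟨hyM, hyB⟩
      obtain ⟨u, huS, hyu⟩ := mem_iUnion₂.mp hyM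
      exact mem_biUnion ⟨huS, y, hyu, hyB⟩ hyu
    have hx2 : x ∈ closure (M ∩ closedBall x 1) := by
      rw [Metric.mem_closure_iff] at hx ⊢
      intro ε hε
      obtain ⟨y, hy, hdy⟩ := hx (min ε 1) (lt_min hε one_pos)
      refine ⟨y, ⟨hy, ?_⟩, hdy.trans_le (min_le_left _ _)⟩
      rw [mem_closedBall, dist_comm]
      exact (hdy.trans_le (min_le_right _ _)).le
    have hx3 : x ∈ ⋃ u ∈ F, C u := by
      rw [← hclosedF.closure_eq]
      exact closure_mono hsub hx2
    obtain ⟨u, huF, hxu⟩ := mem_iUnion₂.mp hx3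
    exact mem_biUnion huF.1 hxu
  have hround : ∀ r : ℝ, (∃ u ∈ S, r ≤ ⟪zvec u, w⟫) ∧ (∃ u ∈ S, ⟪zvec u, w⟫ ≤ r) := by
    have main : ∀ t : ℝ, ∃ u ∈ S, |⟪zvec u, w⟫ - t * ‖w‖ ^ 2| ≤ ‖w‖ := by
      intro t
      set u : ℤ × ℤ := (round (t * w 0), round (t * w 1)) with hu
      set y : E2 := zvec u - t • w with hy
      have hy0 : |y 0| ≤ 1 / 2 := by
        rw [hy, PiLp.sub_apply, zvec_0, PiLp.smul_apply, smul_eq_mul, hu]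
        rw [abs_sub_comm]
        exact abs_sub_round (t * w 0)
      have hy1 : |y 1| ≤ 1 / 2 := by
        rw [hy, PiLp.sub_apply, zvec_1, PiLp.smul_apply, smul_eq_mul, hu]
        rw [abs_sub_comm]
        exact abs_sub_round (t * w 1)
      have hynorm : ‖y‖ ≤ 1 := norm_le_one_of_half y hy0 hy1
      have hzy : zvec u = y + t • w := by rw [hy]; abel
      refine ⟨u, ?_, ?_⟩
      · rw [hS, mem_setOf_eq, hzy, inner_add_left, real_inner_smul_left, inner_w_perp,
          mul_zero, add_zero]
        calc |⟪y, perp w⟫| ≤ ‖y‖ * ‖perp w‖ := abs_real_inner_le_norm _ _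
        _ ≤ 1 * ‖w‖ := by
            rw [norm_perp]
            exact mul_le_mul_of_nonneg_right hynorm hnw.le
        _ = ‖w‖ := one_mul _
      · rw [hzy, inner_add_left, real_inner_smul_left, real_inner_self_eq_norm_sq]
        have hb : |⟪y, w⟫| ≤ ‖w‖ := by
          calc |⟪y, w⟫| ≤ ‖y‖ * ‖w‖ := abs_real_inner_le_norm _ _
          _ ≤ 1 * ‖w‖ := mul_le_mul_of_nonneg_right hynorm hnw.le
          _ = ‖w‖ := one_mul _
        have := abs_le.mp hb
        rw [abs_le]
        constructor <;> linarith [this.1, this.2]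
    intro r
    constructor
    · obtain ⟨u, huS, hub⟩ := main ((r + ‖w‖) / ‖w‖ ^ 2)
      have ht : (r + ‖w‖) / ‖w‖ ^ 2 * ‖w‖ ^ 2 = r + ‖w‖ := by
        field_simp
      rw [ht] at hub
      have := abs_le.mp hub
      exact ⟨u, huS, by linarith [this.1]⟩
    · obtain ⟨u, huS, hub⟩ := main ((r - ‖w‖) / ‖w‖ ^ 2)
      have ht : (r - ‖w‖) / ‖w‖ ^ 2 * ‖w‖ ^ 2 = r - ‖w‖ := by
        field_simp
      rw [ht] at hub
      have := abs_le.mp hub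
      exact ⟨u, huS, by linarith [this.2]⟩
  have hline : ∀ z₀ : E2, (M ∩ {z : E2 | ∃ t : ℝ, z = z₀ + t • perp w}).Nonempty := by
    intro z₀
    obtain ⟨⟨up, hupS, hrp⟩, ⟨un, hunS, hrn⟩⟩ := hround (⟪z₀, w⟫ : ℝ)
    have hcont : ContinuousOn (fun z : E2 => ⟪z, w⟫) M :=
      (continuous_id.inner continuous_const).continuousOn
    have hmemp : zvec up ∈ M := mem_biUnion hupS (hzvec_mem up)
    have hmemn : zvec un ∈ M := mem_biUnion hunS (hzvec_mem un)
    have hIcc : ⟪z₀, w⟫ ∈ Icc ((fun z : E2 => ⟪z, w⟫) (zvec un))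
        ((fun z : E2 => ⟪z, w⟫) (zvec up)) := ⟨hrn, hrp⟩
    obtain ⟨z, hzM, hzr⟩ :=
      hMconn.isPreconnected.intermediate_value hmemn hmemp hcont hIcc
    have hdw : ⟪z - z₀, w⟫ = 0 := by
      rw [inner_sub_left]
      simp only at hzr
      rw [hzr]
      ring
    obtain ⟨t, ht⟩ := eq_smul_perp_of_inner_eq_zero w hw (z - z₀) hdw
    exact ⟨z, hzM, ⟨t, by rw [← ht]; abel⟩⟩
  refine ⟨M, hMclosed, hMconn, ⟨S, S, ?_⟩, hline, -(1 + D), 1 + D, by linarith, ?_⟩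
  · rw [hM, hC]
    ext z
    simp only [mem_iUnion, mem_union, exists_prop]
    constructor
    · rintro ⟨u, huS, h | h⟩
      · exact Or.inl ⟨u, huS, h⟩
      · exact Or.inr ⟨u, huS, h⟩
    · rintro (⟨u, huS, h⟩ | ⟨u, huS, h⟩)
      · exact ⟨u, huS, Or.inl h⟩
      · exact ⟨u, huS, Or.inr h⟩
  · intro z hz
    obtain ⟨u, huS, hzu⟩ := mem_iUnion₂.mp hz
    obtain ⟨k, hk, rfl⟩ := hCdecomp u z hzu
    have habs : |⟪k + zvec u, ‖w‖⁻¹ • perp w⟫| ≤ 1 + D := by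
      rw [real_inner_smul_right, inner_add_left, abs_mul,
        abs_of_nonneg (inv_nonneg.mpr hnw.le)]
      have h1 : |⟪k, perp w⟫| ≤ D * ‖w‖ := by
        calc |⟪k, perp w⟫| ≤ ‖k‖ * ‖perp w‖ := abs_real_inner_le_norm _ _
        _ ≤ D * ‖w‖ := by
            rw [norm_perp]
            exact mul_le_mul_of_nonneg_right (hK_norm k hk) hnw.le
      have h2 : |⟪zvec u, perp w⟫| ≤ ‖w‖ := huS
      calc ‖w‖⁻¹ * |⟪k, perp w⟫ + ⟪zvec u, perp w⟫|
          ≤ ‖w‖⁻¹ * (D * ‖w‖ + ‖w‖) := by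
            apply mul_le_mul_of_nonneg_left _ (inv_nonneg.mpr hnw.le)
            exact (abs_add_le _ _).trans (by linarith)
      _ = 1 + D := by field_simp; ring
    have := abs_le.mp habs
    exact ⟨this.1, this.2⟩
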